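/- Let 𝒰 be a nonprincipal ultrafilter on ℕ and let X be a normed space over ℂ into which there is a linear isometric embedding of c₀ (the space of complex sequences converging to 0, with the sup norm). Then there is a linear isometric embedding of ℓ∞ (the space of bounded complex sequences, with the sup norm) into the ultrapower X^𝒰. -/

import Mathlib

/-!
Ultrapowers of normed spaces along a nonprincipal ultrafilter `𝒰` on `ℕ`.

`BoundedSeq X = ℓ∞(X)` is the normed space of bounded sequences in `X` with the sup norm,
`nullSeq 𝕜 𝒰 X = c_𝒰(X)` is the subspace of sequences whose norms tend to `0` along `𝒰`,
and `Ultrapower 𝕜 𝒰 X = ℓ∞(X)/c_𝒰(X)` is the ultrapower, with quotient map `up 𝕜 𝒰`.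

The canonical linear isometry `j : (X*)^𝒰 → (X^𝒰)*` sends the class of a (bounded)
sequence of functionals `(f_n)` to the functional `(x_n)^𝒰 ↦ lim_{n→𝒰} f_n(x_n)`; hence a
functional `φ` on `X^𝒰` lies in the image of `j` if and only if there is a bounded
sequence `(f_n)` in `X*` with `φ((x_n)^𝒰) = lim_{n→𝒰} f_n(x_n)` for every bounded
sequence `(x_n)`.  This is the predicate `InCanonicalImage` below.
-/

open Filter Topology
open scoped ENNReal

noncomputable section

/-- The normed space `ℓ∞(X)` of bounded sequences in `X`, with the sup norm. -/
abbrev BoundedSeq (X : Type*) [NormedAddCommGroup X] := lp (fun _ : ℕ => X) ∞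

variable (𝕜 : Type*) [NontriviallyNormedField 𝕜]

/-- `c_𝒰(X)`: the subspace of bounded sequences tending to zero in norm along `𝒰`. -/
def nullSeq (𝒰 : Ultrafilter ℕ) (X : Type*) [NormedAddCommGroup X] [NormedSpace 𝕜 X] :
    Submodule 𝕜 (BoundedSeq X) where
  carrier := {f | Tendsto (fun n => ‖f n‖) 𝒰 (𝓝 0)}
  zero_mem' := by simp [tendsto_const_nhds]
  add_mem' := by
    intro f g hf hg
    have h := hf.add hg
    rw [add_zero] at h
    exact squeeze_zero (fun n => norm_nonneg _) (fun n => norm_add_le _ _) h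
  smul_mem' := by
    intro c f hf
    have h := hf.const_mul ‖c‖
    rw [mul_zero] at h
    exact squeeze_zero (fun n => norm_nonneg _) (fun n => by simp [norm_smul]) h

/-- The ultrapower `X^𝒰 = ℓ∞(X)/c_𝒰(X)`. -/
abbrev Ultrapower (𝒰 : Ultrafilter ℕ) (X : Type*) [NormedAddCommGroup X] [NormedSpace 𝕜 X] :=
  BoundedSeq X ⧸ nullSeq 𝕜 𝒰 X

/-- The quotient map `ℓ∞(X) → X^𝒰`, `(x_n) ↦ (x_n)^𝒰`. -/
def up (𝒰 : Ultrafilter ℕ) {X : Type*} [NormedAddCommGroup X] [NormedSpace 𝕜 X]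
    (f : BoundedSeq X) : Ultrapower 𝕜 𝒰 X := Submodule.Quotient.mk f

/-- `φ : (X^𝒰)*` lies in the image of the canonical linear isometry
`j : (X*)^𝒰 → (X^𝒰)*` iff it is induced by a bounded sequence of functionals on `X`. -/
def InCanonicalImage (𝒰 : Ultrafilter ℕ) {X : Type*} [NormedAddCommGroup X] [NormedSpace 𝕜 X]
    (φ : StrongDual 𝕜 (Ultrapower 𝕜 𝒰 X)) : Prop :=
  ∃ f : ℕ → StrongDual 𝕜 X, (∃ C : ℝ, ∀ n, ‖f n‖ ≤ C) ∧
    ∀ x : BoundedSeq X, Tendsto (fun n => f n (x n)) 𝒰 (𝓝 (φ (up 𝕜 𝒰 x)))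

open scoped ZeroAtInfty

section Aux

open ZeroAtInftyContinuousMap in
/-- Truncation of a bounded sequence to its first `n+1` coordinates, as an element of `c₀`. -/
def truncC0 (n : ℕ) (a : lp (fun _ : ℕ => ℂ) ∞) : C₀(ℕ, ℂ) where
  toFun k := if k ≤ n then a k else 0
  continuous_toFun := continuous_of_discreteTopology
  zero_at_infty' := by
    rw [cocompact_eq_atTop (α := ℕ)]
    refine Tendsto.congr' ?_ tendsto_const_nhds
    filter_upwards [Filter.eventually_gt_atTop n] with k hk
    simp [Nat.not_le_of_gt hk]

lemma truncC0_apply (n k : ℕ) (a : lp (fun _ : ℕ => ℂ) ∞) :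
    truncC0 n a k = if k ≤ n then a k else 0 := rfl

lemma truncC0_norm_le (n : ℕ) (a : lp (fun _ : ℕ => ℂ) ∞) : ‖truncC0 n a‖ ≤ ‖a‖ := by
  rw [← ZeroAtInftyContinuousMap.norm_toBCF_eq_norm]
  refine (BoundedContinuousFunction.norm_le (norm_nonneg a)).2 fun k => ?_
  show ‖truncC0 n a k‖ ≤ ‖a‖
  rw [truncC0_apply]
  split_ifs
  · exact lp.norm_apply_le_norm ENNReal.top_ne_zero a k
  · rw [norm_zero]; exact norm_nonneg a

lemma le_truncC0_norm {n k : ℕ} (hk : k ≤ n) (a : lp (fun _ : ℕ => ℂ) ∞) :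
    ‖a k‖ ≤ ‖truncC0 n a‖ := by
  have := BoundedContinuousFunction.norm_coe_le_norm (truncC0 n a).toBCF k
  rw [ZeroAtInftyContinuousMap.norm_toBCF_eq_norm] at this
  simpa [truncC0_apply, hk] using this

lemma truncC0_add (n : ℕ) (a b : lp (fun _ : ℕ => ℂ) ∞) :
    truncC0 n (a + b) = truncC0 n a + truncC0 n b := by
  ext k
  simp only [truncC0_apply, ZeroAtInftyContinuousMap.coe_add, Pi.add_apply, truncC0_apply,
    lp.coeFn_add, Pi.add_apply]
  split_ifs <;> simp

lemma truncC0_smul (n : ℕ) (c : ℂ) (a : lp (fun _ : ℕ => ℂ) ∞) :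
    truncC0 n (c • a) = c • truncC0 n a := by
  ext k
  simp only [truncC0_apply, ZeroAtInftyContinuousMap.coe_smul, Pi.smul_apply, truncC0_apply,
    lp.coeFn_smul, Pi.smul_apply, smul_eq_mul]
  split_ifs <;> simp

variable {X : Type*} [NormedAddCommGroup X] [NormedSpace ℂ X]

/-- The bounded sequence `n ↦ T (truncC0 n a)` in `X`. -/
def gSeq (T : C₀(ℕ, ℂ) →ₗᵢ[ℂ] X) (a : lp (fun _ : ℕ => ℂ) ∞) : BoundedSeq X :=
  ⟨fun n => T (truncC0 n a), memℓp_infty ⟨‖a‖, by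
    rintro - ⟨n, rfl⟩
    show ‖T (truncC0 n a)‖ ≤ ‖a‖
    rw [T.norm_map]; exact truncC0_norm_le n a⟩⟩

lemma gSeq_apply (T : C₀(ℕ, ℂ) →ₗᵢ[ℂ] X) (a : lp (fun _ : ℕ => ℂ) ∞) (n : ℕ) :
    gSeq T a n = T (truncC0 n a) := rfl

/-- `gSeq` as a linear map. -/
def gLin (T : C₀(ℕ, ℂ) →ₗᵢ[ℂ] X) : lp (fun _ : ℕ => ℂ) ∞ →ₗ[ℂ] BoundedSeq X where
  toFun := gSeq T
  map_add' a b := by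
    ext n
    simp [gSeq_apply, truncC0_add, lp.coeFn_add, map_add]
  map_smul' c a := by
    ext n
    simp [gSeq_apply, truncC0_smul, lp.coeFn_smul, map_smul]

end Aux


/-- **Statement 19.** If a normed space `X` over `ℂ` contains an isometric copy of `c₀`
(the space `C₀(ℕ, ℂ)` of complex sequences converging to `0`, with the sup norm), then the
ultrapower `X^𝒰` contains an isometric copy of `ℓ∞` (the bounded complex sequences with
the sup norm). -/
theorem ultrapower_contains_ell_infty_of_c0
    (𝒰 : Ultrafilter ℕ) (h𝒰 : (𝒰 : Filter ℕ) ≤ Filter.cofinite)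
    (X : Type*) [NormedAddCommGroup X] [NormedSpace ℂ X]
    (hc0 : Nonempty (C₀(ℕ, ℂ) →ₗᵢ[ℂ] X)) :
    Nonempty ((lp (fun _ : ℕ => ℂ) ∞) →ₗᵢ[ℂ] Ultrapower ℂ 𝒰 X) := by
  obtain ⟨T⟩ := hc0
  refine ⟨⟨(nullSeq ℂ 𝒰 X).mkQ.comp (gLin T), fun a => ?_⟩⟩
  have hmk : ((nullSeq ℂ 𝒰 X).mkQ.comp (gLin T)) a
      = Submodule.Quotient.mk (gSeq T a) := rfl
  rw [hmk]
  refine le_antisymm ((Submodule.Quotient.norm_mk_le _ _).trans ?_) ?_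
  · refine lp.norm_le_of_forall_le (norm_nonneg a) fun n => ?_
    show ‖T (truncC0 n a)‖ ≤ ‖a‖
    rw [T.norm_map]; exact truncC0_norm_le n a
  · refine le_of_forall_pos_le_add fun ε hε => ?_
    obtain ⟨m, hm, hmlt⟩ := Submodule.Quotient.norm_mk_lt
      (Submodule.Quotient.mk (gSeq T a) : Ultrapower ℂ 𝒰 X)
      (show (0:ℝ) < ε/3 by linarith)
    have hz : m - gSeq T a ∈ nullSeq ℂ 𝒰 X := (Submodule.Quotient.eq _).1 hm
    have hz' : Tendsto (fun n => ‖(m - gSeq T a) n‖) 𝒰 (𝓝 0) := hz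
    have hE1 : ∀ᶠ n in (𝒰 : Filter ℕ), ‖(m - gSeq T a) n‖ < ε/3 :=
      hz'.eventually (eventually_lt_nhds (by linarith))
    obtain ⟨k, hk⟩ : ∃ k, ‖a‖ - ε/3 < ‖a k‖ := by
      refine exists_lt_of_lt_ciSup ?_
      have : ‖a‖ = ⨆ i, ‖a i‖ := lp.norm_eq_ciSup a
      linarith [this.symm.le]
    have hE2 : ∀ᶠ n in (𝒰 : Filter ℕ), ‖a‖ - ε/3 < ‖gSeq T a n‖ := by
      have hle : (𝒰 : Filter ℕ) ≤ atTop := h𝒰.trans_eq Nat.cofinite_eq_atTop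
      refine Filter.Eventually.filter_mono hle ?_
      filter_upwards [Filter.eventually_ge_atTop k] with n hn
      have h1 : ‖a k‖ ≤ ‖truncC0 n a‖ := le_truncC0_norm hn a
      have h2 : ‖gSeq T a n‖ = ‖truncC0 n a‖ := by
        rw [gSeq_apply, T.norm_map]
      linarith
    obtain ⟨n, hn1, hn2⟩ := (hE1.and hE2).exists
    have hmn : ‖m n‖ ≤ ‖m‖ := lp.norm_apply_le_norm ENNReal.top_ne_zero m n
    have hsub : ‖(m - gSeq T a) n‖ = ‖m n - gSeq T a n‖ := by
      congr 1
    have htri : ‖gSeq T a n‖ ≤ ‖m n‖ + ‖m n - gSeq T a n‖ := by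
      calc ‖gSeq T a n‖ = ‖m n - (m n - gSeq T a n)‖ := by rw [sub_sub_cancel]
        _ ≤ ‖m n‖ + ‖m n - gSeq T a n‖ := norm_sub_le _ _
    rw [hsub] at hn1
    linarith
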